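/- Partition the space of n × m real matrices with entries in [0,1] into open cells indexed by pairs (a partition of the nm entries into d nonempty classes, a total order on the classes), where a matrix lies in the cell if entries are equal exactly when they are in the same class and the common values are ordered according to the chosen order. Then each generalized diagonal subspace (the set of matrices in which the rows indexed by some fixed equivalence relation on {1,…,n} coincide) is a union of closures of these cells, and the symmetric group Σ_n acting by permuting rows acts freely on the set of cells lying outside the fat diagonal (the union of all generalized diagonals). -/

import Mathlib

namespace Stmt10

/-- The cube of `n × m` matrices with entries in `[0,1]`. -/
def Cube (n m : ℕ) : Set (Fin n → Fin m → ℝ) :=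
  {A | ∀ i j, A i j ∈ Set.Icc (0 : ℝ) 1}

/-- The open cell indexed by a labelling `c` of the `nm` entries by `d` (ordered)
equivalence classes: a matrix lies in the cell iff its entries are obtained from a
strictly increasing list `w` of `d` values in `[0,1]` via `A i j = w (c (i,j))`; thus
two entries are equal exactly when they are in the same class, and the common values
are ordered according to the chosen total order on the classes. -/
def Cell (n m d : ℕ) (c : Fin n × Fin m → Fin d) : Set (Fin n → Fin m → ℝ) :=
  {A | ∃ w : Fin d → ℝ, StrictMono w ∧ (∀ k, w k ∈ Set.Icc (0 : ℝ) 1) ∧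
    ∀ i j, A i j = w (c (i, j))}

/-- The generalized diagonal attached to an equivalence relation on the rows: the set
of matrices in the cube in which equivalent rows coincide. -/
def GenDiag (n m : ℕ) (r : Setoid (Fin n)) : Set (Fin n → Fin m → ℝ) :=
  {A | A ∈ Cube n m ∧ ∀ i i', r.r i i' → A i = A i'}

/-- The fat diagonal: the union of the generalized diagonals over all nontrivial
equivalence relations, i.e. the matrices in the cube having two equal rows. -/
def FatDiag (n m : ℕ) : Set (Fin n → Fin m → ℝ) :=
  {A | A ∈ Cube n m ∧ ∃ i i', i ≠ i' ∧ A i = A i'}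

/-- The action of a permutation of the rows on cell labels. -/
def permCell (n m d : ℕ) (σ : Equiv.Perm (Fin n)) (c : Fin n × Fin m → Fin d) :
    Fin n × Fin m → Fin d :=
  fun p => c (σ⁻¹ p.1, p.2)

lemma isClosed_genDiag (n m : ℕ) (r : Setoid (Fin n)) : IsClosed (GenDiag n m r) := by
  have h : GenDiag n m r =
      (⋂ (i : Fin n) (j : Fin m), {A : Fin n → Fin m → ℝ | A i j ∈ Set.Icc (0:ℝ) 1}) ∩
      (⋂ (i : Fin n) (i' : Fin n) (_ : r.r i i') (j : Fin m),
        {A : Fin n → Fin m → ℝ | A i j = A i' j}) := by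
    ext A
    simp only [GenDiag, Set.mem_setOf_eq, Set.mem_inter_iff, Set.mem_iInter, Cube]
    constructor
    · rintro ⟨h1, h2⟩
      exact ⟨h1, fun i i' hr j => congrFun (h2 i i' hr) j⟩
    · rintro ⟨h1, h2⟩
      exact ⟨h1, fun i i' hr => funext fun j => h2 i i' hr j⟩
  rw [h]
  apply IsClosed.inter
  · apply isClosed_iInter; intro i
    apply isClosed_iInter; intro j
    exact IsClosed.preimage ((continuous_apply j).comp (continuous_apply i))
      isClosed_Icc
  · apply isClosed_iInter; intro i
    apply isClosed_iInter; intro i'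
    apply isClosed_iInter; intro _
    apply isClosed_iInter; intro j
    exact isClosed_eq ((continuous_apply j).comp (continuous_apply i))
      ((continuous_apply j).comp (continuous_apply i'))

lemma list_map_pointwise {α β : Type*} (f g : α → β) :
    ∀ l : List α, l.map f = l.map g → ∀ x ∈ l, f x = g x := by
  intro l
  induction l with
  | nil => intro _ x hx; simp at hx
  | cons a t ih =>
    intro h x hx
    simp only [List.map_cons, List.cons.injEq] at h
    rcases List.mem_cons.mp hx with rfl | hxt
    · exact h.1
    · exact ih h.2 x hxt

lemma map_pointwise_eq {d : ℕ} (w w' : Fin d → ℝ) (hw : StrictMono w) (hw' : StrictMono w')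
    (M : Multiset (Fin d)) (h : M.map w = M.map w') : ∀ k ∈ M, w k = w' k := by
  classical
  set l : List (Fin d) := Multiset.sort M (· ≤ ·) with hl
  have hlM : (l : Multiset (Fin d)) = M := Multiset.sort_eq M _
  have hsorted : l.Pairwise (· ≤ ·) := Multiset.pairwise_sort M _
  have hs1 : (l.map w).Pairwise (· ≤ ·) :=
    List.Pairwise.map w (fun a b hab => hw.monotone hab) hsorted
  have hs2 : (l.map w').Pairwise (· ≤ ·) :=
    List.Pairwise.map w' (fun a b hab => hw'.monotone hab) hsorted
  have hperm : (l.map w).Perm (l.map w') := by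
    rw [← Multiset.coe_eq_coe]
    have h1 : ((l.map w : List ℝ) : Multiset ℝ) = M.map w := by rw [← hlM]; simp
    have h2 : ((l.map w' : List ℝ) : Multiset ℝ) = M.map w' := by rw [← hlM]; simp
    rw [h1, h2, h]
  have heq : l.map w = l.map w' := hperm.eq_of_pairwise' hs1 hs2
  intro k hk
  have hkl : k ∈ l := by rw [← hlM] at hk; exact hk
  exact list_map_pointwise w w' l heq k hkl

/-- Each generalized diagonal is a union of closures of cells, and the symmetric group
`Σ_n`, acting by permuting rows, acts freely on the cells lying outside the fat
diagonal. -/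
theorem genDiag_union_of_cell_closures_and_free_action_off_fat_diagonal (n m : ℕ) :
    (∀ r : Setoid (Fin n),
      GenDiag n m r =
        ⋃ p : {p : Σ d : ℕ, Fin n × Fin m → Fin d //
            Function.Surjective p.2 ∧ closure (Cell n m p.1 p.2) ⊆ GenDiag n m r},
          closure (Cell n m p.1.1 p.1.2)) ∧
    (∀ (d : ℕ) (c : Fin n × Fin m → Fin d) (σ : Equiv.Perm (Fin n)),
      Disjoint (Cell n m d c) (FatDiag n m) →
      Cell n m d (permCell n m d σ c) = Cell n m d c → σ = 1) := by
  classical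
  constructor
  · intro r
    ext A
    simp only [Set.mem_iUnion]
    constructor
    · intro hA
      -- construct the canonical cell of A
      set s : Finset ℝ := Finset.image (fun p : Fin n × Fin m => A p.1 p.2) Finset.univ
        with hs
      have hmem : ∀ i j, A i j ∈ s := by
        intro i j
        simp only [hs, Finset.mem_image]
        exact ⟨(i, j), Finset.mem_univ _, rfl⟩
      set e : Fin s.card ≃o {x // x ∈ s} := s.orderIsoOfFin rfl with he
      set c : Fin n × Fin m → Fin s.card := fun p => e.symm ⟨A p.1 p.2, hmem p.1 p.2⟩
        with hc
      set w : Fin s.card → ℝ := fun k => (e k : ℝ) with hw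
      have hwmono : StrictMono w := by
        intro k k' hkk
        exact Subtype.coe_lt_coe.mpr (e.strictMono hkk)
      have hwIcc : ∀ k, w k ∈ Set.Icc (0:ℝ) 1 := by
        intro k
        have : (e k : ℝ) ∈ s := (e k).2
        simp only [hs, Finset.mem_image] at this
        obtain ⟨p, _, hp⟩ := this
        show ((e k : {x // x ∈ s}) : ℝ) ∈ Set.Icc (0:ℝ) 1
        rw [← hp]
        exact hA.1 p.1 p.2
      have hAw : ∀ i j, A i j = w (c (i, j)) := by
        intro i j
        simp only [hw, hc, OrderIso.apply_symm_apply]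
      have hAcell : A ∈ Cell n m s.card c := ⟨w, hwmono, hwIcc, hAw⟩
      have hcsurj : Function.Surjective c := by
        intro k
        have : (e k : ℝ) ∈ s := (e k).2
        simp only [hs, Finset.mem_image] at this
        obtain ⟨p, _, hp⟩ := this
        refine ⟨p, ?_⟩
        simp only [hc]
        have : (⟨A p.1 p.2, hmem p.1 p.2⟩ : {x // x ∈ s}) = e k := Subtype.ext hp
        rw [this, OrderIso.symm_apply_apply]
      have hsub : Cell n m s.card c ⊆ GenDiag n m r := by
        rintro B ⟨w', hw'mono, hw'Icc, hB⟩
        constructor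
        · intro i j; rw [hB i j]; exact hw'Icc _
        · intro i i' hr
          have hAii : A i = A i' := hA.2 i i' hr
          funext j
          have hcc : c (i, j) = c (i', j) :=
            congrArg e.symm (Subtype.ext (congrFun hAii j))
          rw [hB i j, hB i' j, hcc]
      have hclsub : closure (Cell n m s.card c) ⊆ GenDiag n m r :=
        (isClosed_genDiag n m r).closure_subset_iff.mpr hsub
      exact ⟨⟨⟨s.card, c⟩, hcsurj, hclsub⟩, subset_closure hAcell⟩
    · rintro ⟨⟨⟨d, c⟩, _, hsub⟩, hA⟩
      exact hsub hA
  · intro d c σ hdisj hcell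
    set w : Fin d → ℝ := fun k => (k : ℝ) / d with hw
    have hwmono : StrictMono w := by
      rcases Nat.eq_zero_or_pos d with rfl | hd
      · intro k; exact k.elim0
      · intro k k' hkk
        have hdpos : (0:ℝ) < d := by exact_mod_cast hd
        exact div_lt_div_of_pos_right (by exact_mod_cast hkk) hdpos
    have hwIcc : ∀ k, w k ∈ Set.Icc (0:ℝ) 1 := by
      rcases Nat.eq_zero_or_pos d with rfl | hd
      · intro k; exact k.elim0
      · intro k
        have hdpos : (0:ℝ) < d := by exact_mod_cast hd
        constructor
        · positivity
        · rw [div_le_one hdpos]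
          exact_mod_cast (le_of_lt k.2)
    set A : Fin n → Fin m → ℝ := fun i j => w (c (i, j)) with hA
    have hAcell : A ∈ Cell n m d c := ⟨w, hwmono, hwIcc, fun i j => rfl⟩
    have hA2 : A ∈ Cell n m d (permCell n m d σ c) := by rw [hcell]; exact hAcell
    obtain ⟨w', hw'mono, _, hB⟩ := hA2
    -- hB : ∀ i j, A i j = w' (c (σ⁻¹ i, j))
    have hkey : ∀ i j, w' (c (σ⁻¹ i, j)) = w (c (i, j)) := fun i j => (hB i j).symm
    have hkey2 : ∀ i j, w' (c (i, j)) = w (c (σ i, j)) := by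
      intro i j
      have := hkey (σ i) j
      rwa [Equiv.Perm.inv_def, Equiv.symm_apply_apply] at this
    -- multiset argument : w = w' on the range of c
    have hMeq : (Multiset.map c Finset.univ.val).map w =
        (Multiset.map c Finset.univ.val).map w' := by
      rw [Multiset.map_map, Multiset.map_map]
      have hperm : Multiset.map (⇑(Equiv.prodCongr σ (Equiv.refl (Fin m))))
          (Finset.univ.val : Multiset (Fin n × Fin m)) = Finset.univ.val := by
        have h := Finset.map_univ_equiv (Equiv.prodCongr σ (Equiv.refl (Fin m)))
        calc Multiset.map (⇑(Equiv.prodCongr σ (Equiv.refl (Fin m)))) Finset.univ.val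
            = (Finset.univ.map (Equiv.prodCongr σ (Equiv.refl (Fin m))).toEmbedding).val :=
              rfl
          _ = Finset.univ.val := by rw [h]
      conv_lhs => rw [← hperm, Multiset.map_map]
      apply Multiset.map_congr rfl
      intro p _
      exact (hkey2 p.1 p.2).symm
    have hww' : ∀ p : Fin n × Fin m, w (c p) = w' (c p) := by
      intro p
      exact map_pointwise_eq w w' hwmono hw'mono _ hMeq (c p)
        (Multiset.mem_map_of_mem c (Finset.mem_univ p))
    -- rows of A are permuted trivially
    have hrows : ∀ i, A (σ⁻¹ i) = A i := by
      intro i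
      funext j
      have h1 : A i j = w' (c (σ⁻¹ i, j)) := hB i j
      rw [h1, ← hww' (σ⁻¹ i, j)]
    have hAnotfat : A ∉ FatDiag n m := Set.disjoint_left.mp hdisj hAcell
    have hAcube : A ∈ Cube n m := fun i j => hwIcc _
    have hdistinct : ∀ i i', A i = A i' → i = i' := by
      intro i i' hii
      by_contra hne
      exact hAnotfat ⟨hAcube, i, i', hne, hii⟩
    have hfix : ∀ i, σ⁻¹ i = i := fun i => hdistinct _ _ (hrows i)
    exact inv_eq_one.mp (Equiv.ext hfix)

end Stmt10
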